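/- arXiv:2602.23353 — 4 statements merged into one kernel-verified Lean document; each statement's English description precedes it below -/
import Mathlib

section
/- Let A ∈ ℝ^{n×d_a}, B ∈ ℝ^{n×d_b}, and d' ≤ min(d_a, d_b). Among pairs of matrices P ∈ ℝ^{d'×d_a}, Q ∈ ℝ^{d'×d_b} with orthonormal rows (PPᵀ = QQᵀ = I_{d'}), the Frobenius inner product ⟨PAᵀ, BQᵀ⟩ is maximized by taking P and Q to be the transposes of the matrices formed by the first d' left and right singular vectors, respectively, of AᵀB (singular values in non-increasing order). The maximal value equals σ₁ + ... + σ_{d'}, the sum of the d' largest singular values of AᵀB. -/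
open Matrix BigOperators Finset


lemma col_norm_le {d' da : ℕ} (X : Matrix (Fin d') (Fin da) ℝ)
    (hX : X * Xᵀ = 1) (i : Fin da) : ∑ k : Fin d', (X k i)^2 ≤ 1 := by
  set M := Xᵀ * X with hM
  have hidem : M * M = M := by
    rw [hM, Matrix.mul_assoc, ← Matrix.mul_assoc X, hX, Matrix.one_mul]
  have hsym : ∀ a b, M a b = M b a := by
    intro a b
    simp [hM, Matrix.mul_apply, mul_comm]
  have hdiag : M i i = ∑ j, (M i j)^2 := by
    conv_lhs => rw [← hidem]
    rw [Matrix.mul_apply]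
    exact Finset.sum_congr rfl fun j _ => by rw [hsym j i]; ring
  have h1 : (M i i)^2 ≤ M i i := by
    conv_rhs => rw [hdiag]
    exact Finset.single_le_sum (f := fun j => (M i j)^2) (fun j _ => sq_nonneg _)
      (Finset.mem_univ i)
  have h2 : 0 ≤ M i i := by
    rw [hM, Matrix.mul_apply]
    exact Finset.sum_nonneg fun k _ => by
      simp only [Matrix.transpose_apply]
      exact mul_self_nonneg _
  have hMii : M i i = ∑ k : Fin d', (X k i)^2 := by
    rw [hM, Matrix.mul_apply]
    exact Finset.sum_congr rfl fun k _ => by simp [Matrix.transpose_apply]; ring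
  rw [← hMii]
  nlinarith [h1, h2]

lemma sum_fin_ite {n m : ℕ} (j : Fin m) (e : Fin n → ℝ) :
    (∑ i : Fin n, if (i:ℕ) = (j:ℕ) then e i else 0)
      = if h : (j:ℕ) < n then e ⟨j, h⟩ else 0 := by
  split
  · next h =>
    rw [Finset.sum_eq_single ⟨(j:ℕ), h⟩]
    · simp
    · intro b _ hb
      rw [if_neg (by simpa [Fin.ext_iff] using hb)]
    · intro hmem; exact absurd (Finset.mem_univ _) hmem
  · next h =>
    apply Finset.sum_eq_zero
    intro i _
    rw [if_neg (by omega)]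

lemma abel_bound (σ c : ℕ → ℝ) (m d' : ℕ) (hd : d' ≤ m)
    (h0 : ∀ i, 0 ≤ σ i) (hanti : ∀ i j, i ≤ j → σ j ≤ σ i)
    (hc1 : ∀ t, c t ≤ 1) (hcd : ∀ t, ∑ i ∈ range t, c i ≤ (d' : ℝ)) :
    ∑ t ∈ range m, σ t * c t ≤ ∑ t ∈ range d', σ t := by
  set c' : ℕ → ℝ := fun t => if t < d' then (1:ℝ) else 0 with hc'
  have hrhs : ∑ t ∈ range d', σ t = ∑ t ∈ range m, σ t * c' t := by
    rw [← Finset.sum_subset (Finset.range_subset_range.2 hd)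
      (fun x _ hx => by simp only [hc', if_neg (by simpa using hx : ¬ x < d'), mul_zero])]
    apply Finset.sum_congr rfl
    intro t ht
    simp only [hc', if_pos (Finset.mem_range.1 ht), mul_one]
  rw [hrhs]
  have hS : ∀ t, ∑ i ∈ range t, c i ≤ ∑ i ∈ range t, c' i := by
    intro t
    rcases le_total t d' with h | h
    · have : ∑ i ∈ range t, c' i = t := by
        rw [Finset.sum_congr rfl (fun i hi => if_pos (lt_of_lt_of_le (Finset.mem_range.1 hi) h))]
        simp
      rw [this]
      calc ∑ i ∈ range t, c i ≤ ∑ i ∈ range t, (1:ℝ) := Finset.sum_le_sum fun i _ => hc1 i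
        _ = t := by simp
    · have : ∑ i ∈ range t, c' i = d' := by
        rw [← Finset.sum_subset (Finset.range_subset_range.2 h)
          (fun x _ hx => if_neg (by simpa using hx))]
        rw [Finset.sum_congr rfl (fun i hi => if_pos (Finset.mem_range.1 hi))]
        simp
      rw [this]
      exact hcd t
  have key := Finset.sum_range_by_parts σ c m
  have key' := Finset.sum_range_by_parts σ c' m
  simp only [smul_eq_mul] at key key'
  rw [key, key']
  apply sub_le_sub
  · exact mul_le_mul_of_nonneg_left (hS m) (h0 _)
  · apply Finset.sum_le_sum
    intro i _
    exact mul_le_mul_of_nonpos_left (hS (i+1)) (by linarith [hanti i (i+1) (Nat.le_succ i)])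
lemma frob_sum_eq (X : Matrix (Fin d') (Fin da) ℝ) (hX : X * Xᵀ = 1) :
    ∑ t ∈ range da, (if h : t < da then ∑ k : Fin d', (X k ⟨t,h⟩)^2 else 0) = (d' : ℝ) := by
  have h1 : ∑ t ∈ range da, (if h : t < da then ∑ k : Fin d', (X k ⟨t,h⟩)^2 else 0)
      = ∑ i : Fin da, ∑ k : Fin d', (X k i)^2 := by
    rw [← Fin.sum_univ_eq_sum_range]
    exact Finset.sum_congr rfl fun i _ => by rw [dif_pos i.isLt]
  rw [h1, Finset.sum_comm]
  have h2 : ∑ k : Fin d', ∑ i : Fin da, (X k i)^2 = (X * Xᵀ).trace := by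
    simp only [Matrix.trace, Matrix.diag, Matrix.mul_apply, Matrix.transpose_apply]
    exact Finset.sum_congr rfl fun k _ => Finset.sum_congr rfl fun i _ => (sq (X k i)).symm ▸ by ring
  rw [h2, hX, Matrix.trace_one]
  simp

lemma trace_bound (hd'a : d' ≤ da) (hd'b : d' ≤ db)
    (σ : ℕ → ℝ) (h0 : ∀ i, 0 ≤ σ i) (hanti : ∀ i j, i ≤ j → σ j ≤ σ i)
    (X : Matrix (Fin d') (Fin da) ℝ) (Y : Matrix (Fin d') (Fin db) ℝ)
    (hX : X * Xᵀ = 1) (hY : Y * Yᵀ = 1) :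
    (X * (Matrix.of fun (i : Fin da) (j : Fin db) =>
        if (i:ℕ) = (j:ℕ) then σ (i:ℕ) else 0) * Yᵀ).trace
      ≤ ∑ i ∈ Finset.range d', σ i := by
  set c : ℕ → ℝ := fun t =>
    if hb : t < db then (if ha : t < da then ∑ k, X k ⟨t,ha⟩ * Y k ⟨t,hb⟩ else 0) else 0 with hc
  have htr : (X * (Matrix.of fun (i : Fin da) (j : Fin db) =>
        if (i:ℕ) = (j:ℕ) then σ (i:ℕ) else 0) * Yᵀ).trace = ∑ t ∈ range db, σ t * c t := by
    rw [← Fin.sum_univ_eq_sum_range (fun t => σ t * c t) db]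
    simp only [Matrix.trace, Matrix.diag, Matrix.mul_apply, Matrix.transpose_apply, Matrix.of_apply]
    rw [Finset.sum_comm]
    apply Finset.sum_congr rfl
    intro j _
    have hinner : ∀ k : Fin d', ∑ i : Fin da, X k i * (if (i:ℕ) = (j:ℕ) then σ (i:ℕ) else 0)
        = if h : (j:ℕ) < da then X k ⟨j,h⟩ * σ (j:ℕ) else 0 := by
      intro k
      rw [show (∑ i : Fin da, X k i * (if (i:ℕ) = (j:ℕ) then σ (i:ℕ) else 0))
          = ∑ i : Fin da, (if (i:ℕ) = (j:ℕ) then X k i * σ (i:ℕ) else 0) from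
        Finset.sum_congr rfl fun i _ => by split <;> simp_all]
      exact sum_fin_ite j _
    calc ∑ k : Fin d', (∑ i : Fin da, X k i * (if (i:ℕ) = (j:ℕ) then σ (i:ℕ) else 0)) * Y k j
        = ∑ k : Fin d', (if h : (j:ℕ) < da then X k ⟨j,h⟩ * σ (j:ℕ) else 0) * Y k j := by
          exact Finset.sum_congr rfl fun k _ => by rw [hinner k]
      _ = σ (j:ℕ) * c (j:ℕ) := by
          simp only [hc]
          rw [dif_pos j.isLt]
          split
          · next h =>
            rw [Finset.mul_sum]
            apply Finset.sum_congr rfl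
            intro k _
            have : (⟨(j:ℕ), j.isLt⟩ : Fin db) = j := Fin.ext rfl
            rw [this]; ring
          · simp
  rw [htr]
  set a : ℕ → ℝ := fun t => if h : t < da then ∑ k : Fin d', (X k ⟨t,h⟩)^2 else 0 with ha
  set b : ℕ → ℝ := fun t => if h : t < db then ∑ k : Fin d', (Y k ⟨t,h⟩)^2 else 0 with hb
  have hab : ∀ t, 2 * c t ≤ a t + b t := by
    intro t
    simp only [hc, ha, hb]
    by_cases htb : t < db
    · by_cases hta : t < da
      · rw [dif_pos htb, dif_pos hta, dif_pos hta, dif_pos htb]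
        rw [Finset.mul_sum, ← Finset.sum_add_distrib]
        apply Finset.sum_le_sum
        intro k _
        nlinarith [sq_nonneg (X k ⟨t,hta⟩ - Y k ⟨t,htb⟩)]
      · rw [dif_pos htb, dif_neg hta, dif_neg hta, dif_pos htb]
        simp only [mul_zero, zero_add]
        exact Finset.sum_nonneg fun k _ => sq_nonneg _
    · rw [dif_neg htb, dif_neg htb]
      by_cases hta : t < da
      · rw [dif_pos hta]
        simp only [mul_zero, add_zero]
        exact Finset.sum_nonneg fun k _ => sq_nonneg _
      · simp [dif_neg hta]
  have ha_nonneg : ∀ t, 0 ≤ a t := by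
    intro t; simp only [ha]; split
    · exact Finset.sum_nonneg fun k _ => sq_nonneg _
    · exact le_refl 0
  have hb_nonneg : ∀ t, 0 ≤ b t := by
    intro t; simp only [hb]; split
    · exact Finset.sum_nonneg fun k _ => sq_nonneg _
    · exact le_refl 0
  have hasum : ∀ t, ∑ i ∈ range t, a i ≤ (d' : ℝ) := by
    intro t
    calc ∑ i ∈ range t, a i ≤ ∑ i ∈ range (max t da), a i :=
          Finset.sum_le_sum_of_subset_of_nonneg
            (Finset.range_subset_range.2 (le_max_left _ _)) (fun i _ _ => ha_nonneg i)
      _ = ∑ i ∈ range da, a i := by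
          rw [← Finset.sum_subset (Finset.range_subset_range.2 (le_max_right t da))]
          intro x _ hx
          simp only [ha]
          rw [dif_neg (by simpa using hx)]
      _ = (d' : ℝ) := frob_sum_eq X hX
  have hbsum : ∀ t, ∑ i ∈ range t, b i ≤ (d' : ℝ) := by
    intro t
    calc ∑ i ∈ range t, b i ≤ ∑ i ∈ range (max t db), b i :=
          Finset.sum_le_sum_of_subset_of_nonneg
            (Finset.range_subset_range.2 (le_max_left _ _)) (fun i _ _ => hb_nonneg i)
      _ = ∑ i ∈ range db, b i := by
          rw [← Finset.sum_subset (Finset.range_subset_range.2 (le_max_right t db))]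
          intro x _ hx
          simp only [hb]
          rw [dif_neg (by simpa using hx)]
      _ = (d' : ℝ) := frob_sum_eq Y hY
  apply abel_bound σ c db d' hd'b h0 hanti
  · intro t
    simp only [hc]
    by_cases htb : t < db
    · by_cases hta : t < da
      · rw [dif_pos htb, dif_pos hta]
        have h2 : 2 * (∑ k, X k ⟨t,hta⟩ * Y k ⟨t,htb⟩) ≤ a t + b t := by
          have := hab t
          simp only [hc, dif_pos htb, dif_pos hta] at this
          exact this
        have hba : a t ≤ 1 := by
          simp only [ha]; rw [dif_pos hta]; exact col_norm_le X hX _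
        have hbb : b t ≤ 1 := by
          simp only [hb]; rw [dif_pos htb]; exact col_norm_le Y hY _
        linarith
      · rw [dif_pos htb, dif_neg hta]; norm_num
    · rw [dif_neg htb]; norm_num
  · intro t
    have h2 : ∑ i ∈ range t, 2 * c i ≤ ∑ i ∈ range t, (a i + b i) :=
      Finset.sum_le_sum fun i _ => hab i
    rw [← Finset.mul_sum, Finset.sum_add_distrib] at h2
    have := hasum t
    have := hbsum t
    linarith


/-- Two-sided orthogonal Procrustes: among `P, Q` with orthonormal rows, the Frobenius inner
product `⟨P Aᵀ, B Qᵀ⟩` is maximized by the transposes of the first `d'` left and right singular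
vectors of `AᵀB`, with maximal value the sum of the `d'` largest singular values. -/
theorem procrustes_two_sided {n da db d' : ℕ} (hd'a : d' ≤ da) (hd'b : d' ≤ db)
    (A : Matrix (Fin n) (Fin da) ℝ) (B : Matrix (Fin n) (Fin db) ℝ)
    (U : Matrix (Fin da) (Fin da) ℝ) (V : Matrix (Fin db) (Fin db) ℝ)
    (σ : ℕ → ℝ)
    (hU : U * Uᵀ = 1) (hU' : Uᵀ * U = 1)
    (hV : V * Vᵀ = 1) (hV' : Vᵀ * V = 1)
    (hσ_nonneg : ∀ i, 0 ≤ σ i)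
    (hσ_anti : ∀ i j : ℕ, i ≤ j → σ j ≤ σ i)
    (hSVD : Aᵀ * B =
      U * (Matrix.of fun (i : Fin da) (j : Fin db) =>
        if (i : ℕ) = (j : ℕ) then σ (i : ℕ) else 0) * Vᵀ) :
    (∀ (P : Matrix (Fin d') (Fin da) ℝ) (Q : Matrix (Fin d') (Fin db) ℝ),
        P * Pᵀ = 1 → Q * Qᵀ = 1 →
        ((A * Pᵀ)ᵀ * (B * Qᵀ)).trace ≤ ∑ i ∈ Finset.range d', σ i) ∧
    (let P₀ : Matrix (Fin d') (Fin da) ℝ := Matrix.of fun i j => U j (Fin.castLE hd'a i)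
     let Q₀ : Matrix (Fin d') (Fin db) ℝ := Matrix.of fun i j => V j (Fin.castLE hd'b i)
     P₀ * P₀ᵀ = 1 ∧ Q₀ * Q₀ᵀ = 1 ∧
       ((A * P₀ᵀ)ᵀ * (B * Q₀ᵀ)).trace = ∑ i ∈ Finset.range d', σ i) := by
  set D : Matrix (Fin da) (Fin db) ℝ := Matrix.of fun (i : Fin da) (j : Fin db) =>
    if (i : ℕ) = (j : ℕ) then σ (i : ℕ) else 0 with hD
  have htrace : ∀ (P : Matrix (Fin d') (Fin da) ℝ) (Q : Matrix (Fin d') (Fin db) ℝ),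
      ((A * Pᵀ)ᵀ * (B * Qᵀ)).trace = ((P * U) * D * (Q * V)ᵀ).trace := by
    intro P Q
    rw [Matrix.transpose_mul, Matrix.transpose_transpose]
    have : P * Aᵀ * (B * Qᵀ) = (P * U) * D * (Q * V)ᵀ := by
      rw [Matrix.transpose_mul]
      calc P * Aᵀ * (B * Qᵀ) = P * (Aᵀ * B) * Qᵀ := by
            rw [Matrix.mul_assoc, Matrix.mul_assoc, Matrix.mul_assoc]
        _ = P * U * D * (Vᵀ * Qᵀ) := by
            rw [hSVD]
            simp only [Matrix.mul_assoc]
    rw [this]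
  constructor
  · intro P Q hP hQ
    rw [htrace P Q]
    apply trace_bound hd'a hd'b σ hσ_nonneg hσ_anti
    · rw [Matrix.transpose_mul, Matrix.mul_assoc, ← Matrix.mul_assoc U, hU, Matrix.one_mul, hP]
    · rw [Matrix.transpose_mul, Matrix.mul_assoc, ← Matrix.mul_assoc V, hV, Matrix.one_mul, hQ]
  · intro P₀ Q₀
    have hP₀ : P₀ * P₀ᵀ = 1 := by
      ext i k
      have h1 : (P₀ * P₀ᵀ) i k = (Uᵀ * U) (Fin.castLE hd'a i) (Fin.castLE hd'a k) := by
        simp only [Matrix.mul_apply, Matrix.transpose_apply, Matrix.of_apply, P₀]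
      rw [h1, hU', Matrix.one_apply, Matrix.one_apply]
      simp [Fin.castLE_inj]
    have hQ₀ : Q₀ * Q₀ᵀ = 1 := by
      ext i k
      have h1 : (Q₀ * Q₀ᵀ) i k = (Vᵀ * V) (Fin.castLE hd'b i) (Fin.castLE hd'b k) := by
        simp only [Matrix.mul_apply, Matrix.transpose_apply, Matrix.of_apply, Q₀]
      rw [h1, hV', Matrix.one_apply, Matrix.one_apply]
      simp [Fin.castLE_inj]
    refine ⟨hP₀, hQ₀, ?_⟩
    rw [htrace P₀ Q₀]
    have hPU : P₀ * U = Matrix.of (fun (k : Fin d') (i : Fin da) =>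
        if Fin.castLE hd'a k = i then (1:ℝ) else 0) := by
      ext k i
      have h1 : (P₀ * U) k i = (Uᵀ * U) (Fin.castLE hd'a k) i := by
        simp only [Matrix.mul_apply, Matrix.transpose_apply, Matrix.of_apply, P₀]
      rw [h1, hU', Matrix.one_apply]
      simp
    have hQV : Q₀ * V = Matrix.of (fun (k : Fin d') (j : Fin db) =>
        if Fin.castLE hd'b k = j then (1:ℝ) else 0) := by
      ext k j
      have h1 : (Q₀ * V) k j = (Vᵀ * V) (Fin.castLE hd'b k) j := by
        simp only [Matrix.mul_apply, Matrix.transpose_apply, Matrix.of_apply, Q₀]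
      rw [h1, hV', Matrix.one_apply]
      simp
    rw [hPU, hQV]
    rw [← Fin.sum_univ_eq_sum_range σ d']
    simp only [Matrix.trace, Matrix.diag, Matrix.mul_apply, Matrix.transpose_apply,
      Matrix.of_apply, hD]
    apply Finset.sum_congr rfl
    intro k _
    simp only [ite_mul, one_mul, zero_mul, Finset.sum_ite_eq, Finset.mem_univ, if_true,
      mul_ite, mul_one, mul_zero, Finset.sum_ite_eq']
    rw [Finset.sum_eq_single (Fin.castLE hd'a k)]
    · simp
    · intro b _ hb
      have hnb : ¬ Fin.castLE hd'a k = b := fun h2 => hb h2.symm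
      simp [hnb]
    · intro hmem; exact absurd (Finset.mem_univ _) hmem
end

section
/- Fix a doubly stochastic matrix T ∈ Π_n with strictly positive entries. The map K ↦ KL(T ‖ OT_ε(K)) has gradient (OT_ε(K) − T)/ε, where OT_ε(K) is the entropic optimal transport plan with regularization ε > 0 and KL(T‖P) = Σ_{ij} T_{ij} log(T_{ij}/P_{ij}). -/
open BigOperators

attribute [local instance] Matrix.normedAddCommGroup Matrix.normedSpace

/-- A matrix is doubly stochastic: nonnegative entries, row and column sums all equal to 1. -/
def DoublyStoch {n : ℕ} (T : Matrix (Fin n) (Fin n) ℝ) : Prop :=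
  (∀ i j, 0 ≤ T i j) ∧ (∀ i, ∑ j, T i j = 1) ∧ (∀ j, ∑ i, T i j = 1)

namespace GKLAux

lemma entry_le_one {n : ℕ} {P : Matrix (Fin n) (Fin n) ℝ} (hP : DoublyStoch P) (i j : Fin n) :
    P i j ≤ 1 := by
  have h := hP.2.1 i
  have h2 : P i j ≤ ∑ k, P i k :=
    Finset.single_le_sum (fun k _ => hP.1 i k) (Finset.mem_univ j)
  linarith

lemma sq_le_mul_log_aux {a b : ℝ} (ha : 0 < a) (ha1 : a ≤ 1) (hb : 0 < b) (hba : b ≤ a) :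
    (a - b) ^ 2 ≤ (a - b) * (Real.log a - Real.log b) := by
  have h1 : Real.log b - Real.log a ≤ b / a - 1 := by
    have := Real.log_le_sub_one_of_pos (div_pos hb ha)
    rwa [Real.log_div hb.ne' ha.ne'] at this
  have h2 : a * (Real.log b - Real.log a) ≤ a * (b / a - 1) := mul_le_mul_of_nonneg_left h1 ha.le
  have h3 : a * (b / a - 1) = b - a := by field_simp
  rw [h3] at h2
  -- so a * (log a - log b) ≥ a - b ≥ 0
  have hab : 0 ≤ a - b := sub_nonneg.2 hba
  have hL : 0 ≤ Real.log a - Real.log b := by nlinarith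
  nlinarith [mul_le_mul_of_nonneg_left h2 hab, mul_nonneg (mul_nonneg hab hL) (sub_nonneg.2 ha1)]

lemma sq_le_mul_log {a b : ℝ} (ha : 0 < a) (ha1 : a ≤ 1) (hb : 0 < b) (hb1 : b ≤ 1) :
    (a - b) ^ 2 ≤ (a - b) * (Real.log a - Real.log b) := by
  rcases le_total b a with h | h
  · exact sq_le_mul_log_aux ha ha1 hb h
  · have := sq_le_mul_log_aux hb hb1 ha h
    nlinarith [this]

lemma sum_mul_log {n : ℕ} {A P : Matrix (Fin n) (Fin n) ℝ} (hA : DoublyStoch A)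
    {ε : ℝ} {K : Matrix (Fin n) (Fin n) ℝ} {u v : Fin n → ℝ}
    (hd : ∀ i j, Real.log (P i j) = u i + K i j / ε + v j) :
    ∑ i, ∑ j, A i j * Real.log (P i j)
      = (∑ i, u i) + (∑ j, v j) + (∑ i, ∑ j, A i j * K i j) / ε := by
  have h1 : ∀ i j, A i j * Real.log (P i j)
      = A i j * u i + A i j * K i j / ε + A i j * v j := by
    intro i j; rw [hd i j]; ring
  simp_rw [h1, Finset.sum_add_distrib]
  have hu : ∑ i, ∑ j, A i j * u i = ∑ i, u i := by
    refine Finset.sum_congr rfl fun i _ => ?_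
    rw [← Finset.sum_mul, hA.2.1 i, one_mul]
  have hv : ∑ i, ∑ j, A i j * v j = ∑ j, v j := by
    rw [Finset.sum_comm]
    refine Finset.sum_congr rfl fun j _ => ?_
    rw [← Finset.sum_mul, hA.2.2 j, one_mul]
  have hk : ∑ i, ∑ j, A i j * K i j / ε = (∑ i, ∑ j, A i j * K i j) / ε := by
    simp [Finset.sum_div]
  rw [hu, hv, hk]
  ring

lemma kl_nonneg {n : ℕ} {P Q : Matrix (Fin n) (Fin n) ℝ}
    (hP : DoublyStoch P) (hQ : DoublyStoch Q)
    (hPpos : ∀ i j, 0 < P i j) (hQpos : ∀ i j, 0 < Q i j) :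
    0 ≤ ∑ i, ∑ j, P i j * (Real.log (P i j) - Real.log (Q i j)) := by
  have key : ∀ i j, P i j - Q i j ≤ P i j * (Real.log (P i j) - Real.log (Q i j)) := by
    intro i j
    have h1 : Real.log (Q i j) - Real.log (P i j) ≤ Q i j / P i j - 1 := by
      have := Real.log_le_sub_one_of_pos (div_pos (hQpos i j) (hPpos i j))
      rwa [Real.log_div (hQpos i j).ne' (hPpos i j).ne'] at this
    have hp := hPpos i j
    have h2 := mul_le_mul_of_nonneg_left h1 hp.le
    have h3 : P i j * (Q i j / P i j - 1) = Q i j - P i j := by field_simp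
    rw [h3] at h2
    nlinarith [h2]
  calc (0 : ℝ) = ∑ i : Fin n, ∑ j : Fin n, (P i j - Q i j) := by
        simp [Finset.sum_sub_distrib, hP.2.1, hQ.2.1]
    _ ≤ _ := Finset.sum_le_sum fun i _ => Finset.sum_le_sum fun j _ => key i j

end GKLAux

set_option maxHeartbeats 1000000 in
open GKLAux in
/-- For a fixed doubly stochastic `T` with positive entries, the map
`K ↦ KL(T ‖ OT_ε(K))` has gradient `(OT_ε(K) − T)/ε`: its Fréchet derivative at `K₀` is
`M ↦ (1/ε)⟨OT_ε(K₀) − T, M⟩`. -/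
theorem gradient_KL_entropic_OT {n : ℕ} (ε : ℝ) (hε : 0 < ε)
    (T : Matrix (Fin n) (Fin n) ℝ) (hT : DoublyStoch T) (hTpos : ∀ i j, 0 < T i j)
    (OT : Matrix (Fin n) (Fin n) ℝ → Matrix (Fin n) (Fin n) ℝ)
    (hOT_DS : ∀ K, DoublyStoch (OT K))
    (hOT_pos : ∀ K i j, 0 < OT K i j)
    (hOT_min : ∀ K P, DoublyStoch P →
      (-(∑ i, ∑ j, OT K i j * K i j) + ε * ∑ i, ∑ j, OT K i j * Real.log (OT K i j))
        ≤ (-(∑ i, ∑ j, P i j * K i j) + ε * ∑ i, ∑ j, P i j * Real.log (P i j)))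
    (hOT_dual : ∀ K, ∃ u v : Fin n → ℝ,
      ∀ i j, Real.log (OT K i j) = u i + K i j / ε + v j)
    (K₀ : Matrix (Fin n) (Fin n) ℝ) :
    ∃ f' : Matrix (Fin n) (Fin n) ℝ →L[ℝ] ℝ,
      (∀ M : Matrix (Fin n) (Fin n) ℝ,
        f' M = (1 / ε) * ∑ i, ∑ j, (OT K₀ i j - T i j) * M i j) ∧
      HasFDerivAt
        (fun K => ∑ i, ∑ j, T i j * Real.log (T i j / OT K i j)) f' K₀ := by
  classical
  obtain ⟨u₀, v₀, hd₀⟩ := hOT_dual K₀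
  -- the candidate derivative as a continuous linear map
  let L : Matrix (Fin n) (Fin n) ℝ →ₗ[ℝ] ℝ :=
    { toFun := fun M => (1 / ε) * ∑ i, ∑ j, (OT K₀ i j - T i j) * M i j
      map_add' := by
        intro M N
        simp only [Matrix.add_apply, mul_add, Finset.sum_add_distrib]
      map_smul' := by
        intro c M
        simp only [Matrix.smul_apply, smul_eq_mul, RingHom.id_apply]
        have h : ∀ i j, (OT K₀ i j - T i j) * (c * M i j)
            = c * ((OT K₀ i j - T i j) * M i j) := fun i j => by ring
        simp_rw [h, ← Finset.mul_sum]
        ring }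
  refine ⟨LinearMap.toContinuousLinearMap L, fun M => rfl, ?_⟩
  -- the key quadratic estimate
  have key : ∀ K : Matrix (Fin n) (Fin n) ℝ,
      |(∑ i, ∑ j, T i j * Real.log (T i j / OT K i j))
        - (∑ i, ∑ j, T i j * Real.log (T i j / OT K₀ i j))
        - (1 / ε) * ∑ i, ∑ j, (OT K₀ i j - T i j) * (K i j - K₀ i j)|
      ≤ (1 / ε ^ 2) * ∑ i, ∑ j, (K i j - K₀ i j) ^ 2 := by
    intro K
    obtain ⟨u, v, hd⟩ := hOT_dual K
    set S : ℝ := (∑ i, u i) + (∑ j, v j) with hS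
    set S₀ : ℝ := (∑ i, u₀ i) + (∑ j, v₀ j) with hS₀
    set a : ℝ := ∑ i, ∑ j, T i j * K i j with ha
    set a₀ : ℝ := ∑ i, ∑ j, T i j * K₀ i j with ha₀
    set b : ℝ := ∑ i, ∑ j, OT K₀ i j * K i j with hb
    set b₀ : ℝ := ∑ i, ∑ j, OT K₀ i j * K₀ i j with hb₀
    set c : ℝ := ∑ i, ∑ j, OT K i j * K i j with hc
    set c₀ : ℝ := ∑ i, ∑ j, OT K i j * K₀ i j with hc₀
    set KL1 : ℝ := ∑ i, ∑ j, OT K i j * (Real.log (OT K i j) - Real.log (OT K₀ i j)) with hKL1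
    set KL2 : ℝ := ∑ i, ∑ j, OT K₀ i j * (Real.log (OT K₀ i j) - Real.log (OT K i j)) with hKL2
    -- value formulas via duality
    have hgK : (∑ i, ∑ j, T i j * Real.log (T i j / OT K i j))
        = (∑ i, ∑ j, T i j * Real.log (T i j)) - (S + a / ε) := by
      have e1 : ∀ i j, T i j * Real.log (T i j / OT K i j)
          = T i j * Real.log (T i j) - T i j * Real.log (OT K i j) := by
        intro i j; rw [Real.log_div (hTpos i j).ne' (hOT_pos K i j).ne']; ring
      simp_rw [e1, Finset.sum_sub_distrib]
      rw [sum_mul_log hT hd]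
    have hgK₀ : (∑ i, ∑ j, T i j * Real.log (T i j / OT K₀ i j))
        = (∑ i, ∑ j, T i j * Real.log (T i j)) - (S₀ + a₀ / ε) := by
      have e1 : ∀ i j, T i j * Real.log (T i j / OT K₀ i j)
          = T i j * Real.log (T i j) - T i j * Real.log (OT K₀ i j) := by
        intro i j; rw [Real.log_div (hTpos i j).ne' (hOT_pos K₀ i j).ne']; ring
      simp_rw [e1, Finset.sum_sub_distrib]
      rw [sum_mul_log hT hd₀]
    have hKL1v : KL1 = (S + c / ε) - (S₀ + c₀ / ε) := by
      rw [hKL1]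
      simp_rw [mul_sub, Finset.sum_sub_distrib]
      rw [sum_mul_log (hOT_DS K) hd, sum_mul_log (hOT_DS K) hd₀]
    have hKL2v : KL2 = (S₀ + b₀ / ε) - (S + b / ε) := by
      rw [hKL2]
      simp_rw [mul_sub, Finset.sum_sub_distrib]
      rw [sum_mul_log (hOT_DS K₀) hd₀, sum_mul_log (hOT_DS K₀) hd]
    have hsplit : (∑ i, ∑ j, (OT K₀ i j - T i j) * (K i j - K₀ i j))
        = b - b₀ - a + a₀ := by
      have e : ∀ i j, (OT K₀ i j - T i j) * (K i j - K₀ i j)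
          = (OT K₀ i j * K i j + T i j * K₀ i j)
            - (OT K₀ i j * K₀ i j + T i j * K i j) := fun i j => by ring
      simp_rw [e, Finset.sum_sub_distrib, Finset.sum_add_distrib]
      rw [← ha, ← ha₀, ← hb, ← hb₀]
      ring
    have hXsplit : (∑ i, ∑ j, (OT K i j - OT K₀ i j) * (K i j - K₀ i j))
        = c - c₀ - b + b₀ := by
      have e : ∀ i j, (OT K i j - OT K₀ i j) * (K i j - K₀ i j)
          = (OT K i j * K i j + OT K₀ i j * K₀ i j)
            - (OT K i j * K₀ i j + OT K₀ i j * K i j) := fun i j => by ring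
      simp_rw [e, Finset.sum_sub_distrib, Finset.sum_add_distrib]
      rw [← hb, ← hb₀, ← hc, ← hc₀]
      ring
    have hKL1nn : 0 ≤ KL1 := kl_nonneg (hOT_DS K) (hOT_DS K₀) (hOT_pos K) (hOT_pos K₀)
    have hKL2nn : 0 ≤ KL2 := kl_nonneg (hOT_DS K₀) (hOT_DS K) (hOT_pos K₀) (hOT_pos K)
    -- strong convexity
    have hQ2 : (∑ i, ∑ j, (OT K i j - OT K₀ i j) ^ 2) ≤ KL1 + KL2 := by
      have hpt : ∀ i j, (OT K i j - OT K₀ i j) ^ 2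
          ≤ OT K i j * (Real.log (OT K i j) - Real.log (OT K₀ i j))
            + OT K₀ i j * (Real.log (OT K₀ i j) - Real.log (OT K i j)) := by
        intro i j
        have h := sq_le_mul_log (hOT_pos K i j) (entry_le_one (hOT_DS K) i j)
          (hOT_pos K₀ i j) (entry_le_one (hOT_DS K₀) i j)
        nlinarith [h]
      calc (∑ i, ∑ j, (OT K i j - OT K₀ i j) ^ 2)
          ≤ ∑ i, ∑ j, (OT K i j * (Real.log (OT K i j) - Real.log (OT K₀ i j))
            + OT K₀ i j * (Real.log (OT K₀ i j) - Real.log (OT K i j))) :=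
            Finset.sum_le_sum fun i _ => Finset.sum_le_sum fun j _ => hpt i j
        _ = KL1 + KL2 := by
            rw [hKL1, hKL2]; simp [Finset.sum_add_distrib]
    -- Cauchy-Schwarz
    have hCS : (∑ i, ∑ j, (OT K i j - OT K₀ i j) * (K i j - K₀ i j)) ^ 2
        ≤ (∑ i, ∑ j, (OT K i j - OT K₀ i j) ^ 2) * (∑ i, ∑ j, (K i j - K₀ i j) ^ 2) := by
      have := Finset.sum_mul_sq_le_sq_mul_sq (Finset.univ : Finset (Fin n × Fin n))
        (fun p => OT K p.1 p.2 - OT K₀ p.1 p.2) (fun p => K p.1 p.2 - K₀ p.1 p.2)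
      simpa [← Finset.sum_product', Finset.univ_product_univ] using this
    set X : ℝ := ∑ i, ∑ j, (OT K i j - OT K₀ i j) * (K i j - K₀ i j) with hX
    set H2 : ℝ := ∑ i, ∑ j, (K i j - K₀ i j) ^ 2 with hH2
    have hH2nn : 0 ≤ H2 := by
      rw [hH2]
      exact Finset.sum_nonneg fun i _ => Finset.sum_nonneg fun j _ => sq_nonneg _
    have hXval : X = ε * (KL1 + KL2) := by
      rw [hXsplit, hKL1v, hKL2v]; field_simp; ring
    have hXnn : 0 ≤ X := by
      rw [hXval]
      exact mul_nonneg hε.le (by linarith)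
    -- X ≤ H2 / ε
    have hXle : X ≤ H2 / ε := by
      rcases eq_or_lt_of_le hXnn with h0 | h0
      · rw [← h0]; exact div_nonneg hH2nn hε.le
      · have hQX : (∑ i, ∑ j, (OT K i j - OT K₀ i j) ^ 2) ≤ X / ε := by
          rw [hXval]; rw [mul_comm, mul_div_assoc, div_self hε.ne', mul_one]; exact hQ2
        have h1 : X ^ 2 ≤ (X / ε) * H2 := le_trans hCS
          (mul_le_mul_of_nonneg_right hQX hH2nn)
        have h2 : X * X ≤ X * (H2 / ε) := by
          calc X * X = X ^ 2 := by ring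
            _ ≤ (X / ε) * H2 := h1
            _ = X * (H2 / ε) := by ring
        exact le_of_mul_le_mul_left h2 h0
    -- residual equals KL2
    have hresid : (∑ i, ∑ j, T i j * Real.log (T i j / OT K i j))
        - (∑ i, ∑ j, T i j * Real.log (T i j / OT K₀ i j))
        - (1 / ε) * ∑ i, ∑ j, (OT K₀ i j - T i j) * (K i j - K₀ i j) = KL2 := by
      rw [hgK, hgK₀, hsplit, hKL2v]; ring
    rw [hresid]
    have hKL2le : KL2 ≤ H2 / ε ^ 2 := by
      have h1 : KL2 ≤ KL1 + KL2 := by linarith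
      have h2 : KL1 + KL2 = X / ε := by
        rw [hXval, mul_comm, mul_div_assoc, div_self hε.ne', mul_one]
      have h3 : X / ε ≤ (H2 / ε) / ε := by gcongr
      calc KL2 ≤ X / ε := by rw [← h2]; exact h1
        _ ≤ (H2 / ε) / ε := h3
        _ = H2 / ε ^ 2 := by ring
    rw [abs_of_nonneg hKL2nn]
    calc KL2 ≤ H2 / ε ^ 2 := hKL2le
      _ = (1 / ε ^ 2) * H2 := by ring
  -- conclude HasFDerivAt
  refine hasFDerivAt_iff_isLittleO_nhds_zero.mpr ?_
  rw [Asymptotics.isLittleO_iff]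
  intro cc hcc
  have hCpos : (0 : ℝ) < ((n : ℝ) ^ 2 + 1) / ε ^ 2 := by positivity
  rw [Metric.eventually_nhds_iff]
  refine ⟨cc / (((n : ℝ) ^ 2 + 1) / ε ^ 2), by positivity, ?_⟩
  intro h hdist
  have hnorm : ‖h‖ < cc / (((n : ℝ) ^ 2 + 1) / ε ^ 2) := by
    simpa [dist_eq_norm] using hdist
  have hk := key (K₀ + h)
  have hsimp : ∀ i j, (K₀ + h) i j - K₀ i j = h i j := by
    intro i j; simp [Matrix.add_apply]
  simp_rw [hsimp] at hk
  have hLval : (LinearMap.toContinuousLinearMap L) h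
      = (1 / ε) * ∑ i, ∑ j, (OT K₀ i j - T i j) * h i j := rfl
  have hH2 : (∑ i, ∑ j, h i j ^ 2) ≤ (n : ℝ) ^ 2 * ‖h‖ ^ 2 := by
    have hb : ∀ i j, h i j ^ 2 ≤ ‖h‖ ^ 2 := by
      intro i j
      have h1 : ‖h i j‖ ≤ ‖h‖ := Matrix.norm_entry_le_entrywise_sup_norm h
      have h2 : |h i j| ≤ ‖h‖ := h1
      nlinarith [abs_nonneg (h i j), sq_abs (h i j)]
    calc (∑ i, ∑ j, h i j ^ 2) ≤ ∑ _i : Fin n, ∑ _j : Fin n, ‖h‖ ^ 2 :=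
          Finset.sum_le_sum fun i _ => Finset.sum_le_sum fun j _ => hb i j
      _ = (n : ℝ) ^ 2 * ‖h‖ ^ 2 := by
          simp [Finset.sum_const, Finset.card_univ, nsmul_eq_mul]; ring
  have hbound : ‖(∑ i, ∑ j, T i j * Real.log (T i j / OT (K₀ + h) i j))
      - (∑ i, ∑ j, T i j * Real.log (T i j / OT K₀ i j))
      - (LinearMap.toContinuousLinearMap L) h‖
      ≤ (((n : ℝ) ^ 2 + 1) / ε ^ 2) * (‖h‖ * ‖h‖) := by
    rw [hLval, Real.norm_eq_abs]
    calc |(∑ i, ∑ j, T i j * Real.log (T i j / OT (K₀ + h) i j))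
        - (∑ i, ∑ j, T i j * Real.log (T i j / OT K₀ i j))
        - (1 / ε) * ∑ i, ∑ j, (OT K₀ i j - T i j) * h i j|
        ≤ (1 / ε ^ 2) * ∑ i, ∑ j, h i j ^ 2 := hk
      _ ≤ (1 / ε ^ 2) * ((n : ℝ) ^ 2 * ‖h‖ ^ 2) := by
          apply mul_le_mul_of_nonneg_left hH2 (by positivity)
      _ ≤ (((n : ℝ) ^ 2 + 1) / ε ^ 2) * (‖h‖ * ‖h‖) := by
          have hnn : (0 : ℝ) ≤ ‖h‖ ^ 2 := sq_nonneg _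
          have : (1 / ε ^ 2) * ((n : ℝ) ^ 2 * ‖h‖ ^ 2)
              = ((n : ℝ) ^ 2 / ε ^ 2) * ‖h‖ ^ 2 := by ring
          rw [this]
          have h2 : ((n : ℝ) ^ 2 / ε ^ 2) ≤ ((n : ℝ) ^ 2 + 1) / ε ^ 2 := by
            apply div_le_div_of_nonneg_right _ (by positivity)
            · linarith
          nlinarith [sq_nonneg ‖h‖]
  calc ‖(∑ i, ∑ j, T i j * Real.log (T i j / OT (K₀ + h) i j))
      - (∑ i, ∑ j, T i j * Real.log (T i j / OT K₀ i j))
      - (LinearMap.toContinuousLinearMap L) h‖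
      ≤ (((n : ℝ) ^ 2 + 1) / ε ^ 2) * (‖h‖ * ‖h‖) := hbound
    _ ≤ (((n : ℝ) ^ 2 + 1) / ε ^ 2) * ((cc / (((n : ℝ) ^ 2 + 1) / ε ^ 2)) * ‖h‖) := by
        apply mul_le_mul_of_nonneg_left _ hCpos.le
        exact mul_le_mul_of_nonneg_right hnorm.le (norm_nonneg _)
    _ = cc * ‖h‖ := by field_simp
end

section
/- Let A ∈ ℝ^{n×d_a}, B ∈ ℝ^{n×d_b} with Σ_{xx} = AᵀA and Σ_{yy} = BᵀB positive definite, Σ_{xy} = AᵀB, and let M = Σ_{xx}^{-1/2} Σ_{xy} Σ_{yy}^{-1/2} have SVD M = UΣVᵀ with non-increasing singular values. Then among pairs P ∈ ℝ^{d'×d_a}, Q ∈ ℝ^{d'×d_b} satisfying the whitening constraints PΣ_{xx}Pᵀ = I_{d'} and QΣ_{yy}Qᵀ = I_{d'}, the objective ⟨PΣ_{xy}, Q⟩ is maximized by P = U_{:,1:d'}ᵀ Σ_{xx}^{-1/2}, Q = V_{:,1:d'}ᵀ Σ_{yy}^{-1/2}, with maximal value σ₁ + ... + σ_{d'}. -/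
open Matrix BigOperators Finset

lemma trace_transpose_mul_comm' {a b : ℕ} (M N : Matrix (Fin a) (Fin b) ℝ) :
    (Mᵀ * N).trace = (M * Nᵀ).trace := by
  rw [← Matrix.trace_transpose (M * Nᵀ), Matrix.transpose_mul, Matrix.transpose_transpose,
    Matrix.trace_mul_comm]

lemma mul_cancel_left {a : ℕ} {E F : Matrix (Fin a) (Fin a) ℝ} (h : E * F = 1)
    {c : ℕ} (Z : Matrix (Fin a) (Fin c) ℝ) : E * (F * Z) = Z := by
  rw [← Matrix.mul_assoc, h, Matrix.one_mul]

lemma scalar_bound (σ t : ℕ → ℝ) (N d' : ℕ) (hle : d' ≤ N)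
    (hσ0 : ∀ i, 0 ≤ σ i) (hσa : ∀ i j : ℕ, i ≤ j → σ j ≤ σ i)
    (ht0 : ∀ m, 0 ≤ t m) (ht1 : ∀ m, t m ≤ 1)
    (hts : ∑ m ∈ Finset.range N, t m ≤ (d' : ℝ)) :
    ∑ m ∈ Finset.range N, σ m * t m ≤ ∑ m ∈ Finset.range d', σ m := by
  have hsplit : ∀ f : ℕ → ℝ, ∑ m ∈ Finset.range N, f m
      = ∑ m ∈ Finset.range d', f m + ∑ m ∈ Finset.Ico d' N, f m := by
    intro f
    rw [Finset.range_eq_Ico, Finset.range_eq_Ico]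
    exact (Finset.sum_Ico_consecutive f (Nat.zero_le d') hle).symm
  have hA : ∑ m ∈ Finset.range d', σ m * t m
      ≤ ∑ m ∈ Finset.range d', (σ m + σ d' * (t m - 1)) := by
    apply Finset.sum_le_sum
    intro m hm
    have hm' : m ≤ d' := (Finset.mem_range.mp hm).le
    nlinarith [mul_nonneg (sub_nonneg.mpr (hσa m d' hm')) (sub_nonneg.mpr (ht1 m))]
  have hB : ∑ m ∈ Finset.Ico d' N, σ m * t m
      ≤ ∑ m ∈ Finset.Ico d' N, σ d' * t m := by
    apply Finset.sum_le_sum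
    intro m hm
    exact mul_le_mul_of_nonneg_right (hσa d' m (Finset.mem_Ico.mp hm).1) (ht0 m)
  have key : ∑ m ∈ Finset.range d', (σ m + σ d' * (t m - 1)) + ∑ m ∈ Finset.Ico d' N, σ d' * t m
      = ∑ m ∈ Finset.range d', σ m + σ d' * (∑ m ∈ Finset.range N, t m - d') := by
    rw [hsplit t, Finset.sum_add_distrib, ← Finset.mul_sum, ← Finset.mul_sum,
      Finset.sum_sub_distrib, Finset.sum_const, Finset.card_range]
    ring
  have hfin : σ d' * (∑ m ∈ Finset.range N, t m - d') ≤ 0 := by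
    have h1 : (∑ m ∈ Finset.range N, t m - d') ≤ 0 := by linarith
    have := mul_le_mul_of_nonneg_left h1 (hσ0 d')
    simpa using this
  calc ∑ m ∈ Finset.range N, σ m * t m
      = ∑ m ∈ Finset.range d', σ m * t m + ∑ m ∈ Finset.Ico d' N, σ m * t m := hsplit _
    _ ≤ ∑ m ∈ Finset.range d', (σ m + σ d' * (t m - 1)) + ∑ m ∈ Finset.Ico d' N, σ d' * t m :=
        add_le_add hA hB
    _ = ∑ m ∈ Finset.range d', σ m + σ d' * (∑ m ∈ Finset.range N, t m - d') := key
    _ ≤ ∑ m ∈ Finset.range d', σ m := by linarith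

set_option maxHeartbeats 1600000 in
/-- Closed-form solution of CCA: with `Σxx = AᵀA`, `Σyy = BᵀB` positive definite with
symmetric square roots `Rx, Ry` and inverses `Rxi, Ryi`, and
`M = Σxx^{-1/2} Σxy Σyy^{-1/2} = U S Vᵀ` an SVD with nonincreasing singular values `σ`, the
objective `⟨PΣxy, Q⟩` over whitened pairs (`PΣxxPᵀ = QΣyyQᵀ = I`) is maximized by
`P = U_{:,1:d'}ᵀ Σxx^{-1/2}`, `Q = V_{:,1:d'}ᵀ Σyy^{-1/2}`, with value `σ₁ + ... + σ_{d'}`. -/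
theorem cca_closed_form {n da db d' : ℕ} (hd'a : d' ≤ da) (hd'b : d' ≤ db)
    (A : Matrix (Fin n) (Fin da) ℝ) (B : Matrix (Fin n) (Fin db) ℝ)
    (Rx Rxi : Matrix (Fin da) (Fin da) ℝ) (Ry Ryi : Matrix (Fin db) (Fin db) ℝ)
    (hRx_symm : Rx.IsSymm) (hRy_symm : Ry.IsSymm)
    (hRxi_symm : Rxi.IsSymm) (hRyi_symm : Ryi.IsSymm)
    (hRx_pd : Rx.PosDef) (hRy_pd : Ry.PosDef)
    (hRx_sq : Rx * Rx = Aᵀ * A) (hRy_sq : Ry * Ry = Bᵀ * B)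
    (hRx_inv : Rx * Rxi = 1) (hRx_inv' : Rxi * Rx = 1)
    (hRy_inv : Ry * Ryi = 1) (hRy_inv' : Ryi * Ry = 1)
    (U : Matrix (Fin da) (Fin da) ℝ) (V : Matrix (Fin db) (Fin db) ℝ)
    (σ : ℕ → ℝ)
    (hU : U * Uᵀ = 1) (hU' : Uᵀ * U = 1)
    (hV : V * Vᵀ = 1) (hV' : Vᵀ * V = 1)
    (hσ_nonneg : ∀ i, 0 ≤ σ i)
    (hσ_anti : ∀ i j : ℕ, i ≤ j → σ j ≤ σ i)
    (hSVD : Rxi * (Aᵀ * B) * Ryi =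
      U * (Matrix.of fun (i : Fin da) (j : Fin db) =>
        if (i : ℕ) = (j : ℕ) then σ (i : ℕ) else 0) * Vᵀ) :
    (∀ (P : Matrix (Fin d') (Fin da) ℝ) (Q : Matrix (Fin d') (Fin db) ℝ),
        P * (Aᵀ * A) * Pᵀ = 1 → Q * (Bᵀ * B) * Qᵀ = 1 →
        ((P * (Aᵀ * B))ᵀ * Q).trace ≤ ∑ i ∈ Finset.range d', σ i) ∧
    (let P₀ : Matrix (Fin d') (Fin da) ℝ :=
       (Matrix.of fun i j => U j (Fin.castLE hd'a i)) * Rxi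
     let Q₀ : Matrix (Fin d') (Fin db) ℝ :=
       (Matrix.of fun i j => V j (Fin.castLE hd'b i)) * Ryi
     P₀ * (Aᵀ * A) * P₀ᵀ = 1 ∧ Q₀ * (Bᵀ * B) * Q₀ᵀ = 1 ∧
       ((P₀ * (Aᵀ * B))ᵀ * Q₀).trace = ∑ i ∈ Finset.range d', σ i) := by
  set Sm : Matrix (Fin da) (Fin db) ℝ :=
    Matrix.of (fun (i : Fin da) (j : Fin db) => if (i : ℕ) = (j : ℕ) then σ (i : ℕ) else 0)
    with hSm
  have hcancel : Rx * (Rxi * (Aᵀ * B) * Ryi) * Ry = Aᵀ * B := by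
    rw [← Matrix.mul_assoc Rx (Rxi * (Aᵀ * B)) Ryi, ← Matrix.mul_assoc Rx Rxi (Aᵀ * B),
      hRx_inv, Matrix.one_mul, Matrix.mul_assoc (Aᵀ * B) Ryi Ry, hRy_inv', Matrix.mul_one]
  have hXY : Aᵀ * B = Rx * (U * Sm * Vᵀ) * Ry := by
    rw [← hcancel, hSVD]
  constructor
  · -- upper bound
    intro P Q hP hQ
    set X := P * Rx * U with hXdef
    set Y := Q * Ry * V with hYdef
    have hX : X * Xᵀ = 1 := by
      rw [hXdef]
      simp only [Matrix.transpose_mul, hRx_symm.eq, Matrix.mul_assoc]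
      rw [mul_cancel_left hU, ← Matrix.mul_assoc Rx Rx, hRx_sq, ← Matrix.mul_assoc]
      exact hP
    have hY : Y * Yᵀ = 1 := by
      rw [hYdef]
      simp only [Matrix.transpose_mul, hRy_symm.eq, Matrix.mul_assoc]
      rw [mul_cancel_left hV, ← Matrix.mul_assoc Ry Ry, hRy_sq, ← Matrix.mul_assoc]
      exact hQ
    rw [trace_transpose_mul_comm']
    have hval : P * (Aᵀ * B) * Qᵀ = X * Sm * Yᵀ := by
      rw [hXY, hXdef, hYdef]
      simp only [Matrix.transpose_mul, hRy_symm.eq, Matrix.mul_assoc]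
    rw [hval]
    -- extended entries
    set x : Fin d' → ℕ → ℝ := fun i m => if h : m < da then X i ⟨m, h⟩ else 0 with hxdef
    set y : Fin d' → ℕ → ℝ := fun i m => if h : m < db then Y i ⟨m, h⟩ else 0 with hydef
    have hxX : ∀ (i : Fin d') (j : Fin da), x i (j : ℕ) = X i j := by
      intro i j; simp [hxdef, j.isLt]
    have hyY : ∀ (i : Fin d') (k : Fin db), y i (k : ℕ) = Y i k := by
      intro i j; simp [hydef, j.isLt]
    have hj : ∀ j : Fin da, (∑ i : Fin d', ∑ k : Fin db, X i j * Sm j k * Y i k)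
        = σ (j : ℕ) * ∑ i : Fin d', x i (j : ℕ) * y i (j : ℕ) := by
      intro j
      by_cases hjd : (j : ℕ) < db
      · have hik : ∀ i : Fin d', ∑ k : Fin db, X i j * Sm j k * Y i k
            = σ (j : ℕ) * (x i (j : ℕ) * y i (j : ℕ)) := by
          intro i
          rw [Finset.sum_eq_single (⟨(j : ℕ), hjd⟩ : Fin db)]
          · simp only [hSm, Matrix.of_apply, hxdef, hydef, dif_pos hjd, dif_pos j.isLt,
              if_pos rfl]
            rw [if_pos trivial]
            simp only [Fin.eta]
            ring
          · intro k _ hk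
            have hne : ¬ ((j : ℕ) = (k : ℕ)) := by
              intro h
              exact hk (by apply Fin.ext; simp [← h])
            simp [hSm, hne]
          · intro h; exact absurd (Finset.mem_univ _) h
        rw [Finset.sum_congr rfl (fun i _ => hik i), ← Finset.mul_sum]
      · have hy0 : ∀ i : Fin d', y i (j : ℕ) = 0 := fun i => dif_neg hjd
        have hne : ∀ k : Fin db, ¬ ((j : ℕ) = (k : ℕ)) := fun k h => hjd (h ▸ k.isLt)
        simp [hSm, hne, hy0]
    have expand : (X * Sm * Yᵀ).trace
        = ∑ j : Fin da, ∑ i : Fin d', ∑ k : Fin db, X i j * Sm j k * Y i k := by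
      simp only [Matrix.trace, Matrix.diag, Matrix.mul_apply, Matrix.transpose_apply,
        Finset.sum_mul]
      rw [Finset.sum_congr rfl fun i (_ : i ∈ Finset.univ) =>
        (Finset.sum_comm : (∑ k : Fin db, ∑ j : Fin da, X i j * Sm j k * Y i k) = _)]
      exact Finset.sum_comm
    have htr : (X * Sm * Yᵀ).trace
        = ∑ m ∈ Finset.range da, σ m * ∑ i : Fin d', x i m * y i m := by
      rw [expand]
      rw [Finset.sum_congr rfl (fun j _ => hj j)]
      exact Fin.sum_univ_eq_sum_range (fun m => σ m * ∑ i : Fin d', x i m * y i m) da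
    rw [htr]
    -- the quadratic quantities
    set p : ℕ → ℝ := fun m => ∑ i : Fin d', (x i m) ^ 2 with hpdef
    set q : ℕ → ℝ := fun m => ∑ i : Fin d', (y i m) ^ 2 with hqdef
    have hp0 : ∀ m, 0 ≤ p m := fun m => Finset.sum_nonneg fun i _ => sq_nonneg _
    have hq0 : ∀ m, 0 ≤ q m := fun m => Finset.sum_nonneg fun i _ => sq_nonneg _
    -- diagonal of projection ≤ 1
    have proj_diag : ∀ {c : ℕ} (Z : Matrix (Fin d') (Fin c) ℝ), Z * Zᵀ = 1 →
        ∀ j : Fin c, (∑ i : Fin d', (Z i j) ^ 2) ≤ 1 := by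
      intro c Z hZ j
      set G := Zᵀ * Z with hGdef
      have hGidem : G * G = G := by
        rw [hGdef, Matrix.mul_assoc Zᵀ Z (Zᵀ * Z), ← Matrix.mul_assoc Z Zᵀ Z, hZ,
          Matrix.one_mul]
      have hGsymm : Gᵀ = G := by
        rw [hGdef, Matrix.transpose_mul, Matrix.transpose_transpose]
      have hdiag : G j j = ∑ i : Fin d', (Z i j) ^ 2 := by
        rw [hGdef, Matrix.mul_apply]
        apply Finset.sum_congr rfl
        intro i _
        rw [Matrix.transpose_apply, sq]
      have h1 : G j j = ∑ k : Fin c, G j k * G j k := by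
        conv_lhs => rw [← hGidem]
        rw [Matrix.mul_apply]
        apply Finset.sum_congr rfl
        intro k _
        have := Matrix.ext_iff.mpr hGsymm j k
        rw [Matrix.transpose_apply] at this
        rw [this]
      have h2 : G j j * G j j ≤ ∑ k : Fin c, G j k * G j k :=
        Finset.single_le_sum (f := fun k => G j k * G j k)
          (fun k _ => mul_self_nonneg _) (Finset.mem_univ j)
      have h3 : 0 ≤ G j j := by
        rw [hdiag]; exact Finset.sum_nonneg fun i _ => sq_nonneg _
      rw [← hdiag]
      nlinarith [h1, h2, h3]
    have hp1 : ∀ m, p m ≤ 1 := by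
      intro m
      by_cases hm : m < da
      · have : p m = ∑ i : Fin d', (X i ⟨m, hm⟩) ^ 2 := by
          apply Finset.sum_congr rfl
          intro i _
          rw [hxdef]; simp [hm]
        rw [this]
        exact proj_diag X hX ⟨m, hm⟩
      · have : p m = 0 := by
          apply Finset.sum_eq_zero
          intro i _
          rw [hxdef]; simp [hm]
        rw [this]; norm_num
    have hq1 : ∀ m, q m ≤ 1 := by
      intro m
      by_cases hm : m < db
      · have : q m = ∑ i : Fin d', (Y i ⟨m, hm⟩) ^ 2 := by
          apply Finset.sum_congr rfl
          intro i _
          rw [hydef]; simp [hm]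
        rw [this]
        exact proj_diag Y hY ⟨m, hm⟩
      · have : q m = 0 := by
          apply Finset.sum_eq_zero
          intro i _
          rw [hydef]; simp [hm]
        rw [this]; norm_num
    -- total sums
    have hpsum : ∑ m ∈ Finset.range da, p m = (d' : ℝ) := by
      have h1 : ∑ m ∈ Finset.range da, p m = ∑ j : Fin da, ∑ i : Fin d', (X i j) ^ 2 := by
        rw [← Fin.sum_univ_eq_sum_range (fun m => p m) da]
        apply Finset.sum_congr rfl
        intro j _
        apply Finset.sum_congr rfl
        intro i _
        rw [hxX]
      have h2 : ∑ j : Fin da, ∑ i : Fin d', (X i j) ^ 2 = (X * Xᵀ).trace := by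
        rw [← Matrix.trace_mul_comm]
        simp only [Matrix.trace, Matrix.diag, Matrix.mul_apply, Matrix.transpose_apply, sq]
      rw [h1, h2, hX, Matrix.trace_one]
      simp
    have hqsum : ∑ m ∈ Finset.range db, q m = (d' : ℝ) := by
      have h1 : ∑ m ∈ Finset.range db, q m = ∑ j : Fin db, ∑ i : Fin d', (Y i j) ^ 2 := by
        rw [← Fin.sum_univ_eq_sum_range (fun m => q m) db]
        apply Finset.sum_congr rfl
        intro j _
        apply Finset.sum_congr rfl
        intro i _
        rw [hyY]
      have h2 : ∑ j : Fin db, ∑ i : Fin d', (Y i j) ^ 2 = (Y * Yᵀ).trace := by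
        rw [← Matrix.trace_mul_comm]
        simp only [Matrix.trace, Matrix.diag, Matrix.mul_apply, Matrix.transpose_apply, sq]
      rw [h1, h2, hY, Matrix.trace_one]
      simp
    have hqsum_da : ∑ m ∈ Finset.range da, q m ≤ (d' : ℝ) := by
      have hsub : ∑ m ∈ Finset.range da, q m ≤ ∑ m ∈ Finset.range (max da db), q m := by
        apply Finset.sum_le_sum_of_subset_of_nonneg
        · exact Finset.range_subset_range.mpr (le_max_left _ _)
        · intro m _ _; exact hq0 m
      have heq : ∑ m ∈ Finset.range (max da db), q m = ∑ m ∈ Finset.range db, q m := by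
        symm
        apply Finset.sum_subset (Finset.range_subset_range.mpr (le_max_right _ _))
        intro m _ hm
        have hmd : ¬ m < db := fun h => hm (Finset.mem_range.mpr h)
        apply Finset.sum_eq_zero
        intro i _
        rw [hydef]; simp [hmd]
      calc ∑ m ∈ Finset.range da, q m ≤ ∑ m ∈ Finset.range (max da db), q m := hsub
        _ = ∑ m ∈ Finset.range db, q m := heq
        _ = (d' : ℝ) := hqsum
    -- apply the scalar bound with t = (p+q)/2
    have hcle : ∀ m, (∑ i : Fin d', x i m * y i m) ≤ (p m + q m) / 2 := by
      intro m
      have : (p m + q m) / 2 = ∑ i : Fin d', ((x i m) ^ 2 + (y i m) ^ 2) / 2 := by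
        rw [hpdef, hqdef, ← Finset.sum_add_distrib, ← Finset.sum_div]
      rw [this]
      apply Finset.sum_le_sum
      intro i _
      nlinarith [sq_nonneg (x i m - y i m)]
    calc ∑ m ∈ Finset.range da, σ m * ∑ i : Fin d', x i m * y i m
        ≤ ∑ m ∈ Finset.range da, σ m * ((p m + q m) / 2) := by
          apply Finset.sum_le_sum
          intro m _
          exact mul_le_mul_of_nonneg_left (hcle m) (hσ_nonneg m)
      _ ≤ ∑ m ∈ Finset.range d', σ m := by
          apply scalar_bound _ _ da d' hd'a hσ_nonneg hσ_anti
          · intro m; positivity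
          · intro m
            have := hp1 m; have := hq1 m
            linarith
          · have : ∑ m ∈ Finset.range da, (p m + q m) / 2
                = (∑ m ∈ Finset.range da, p m + ∑ m ∈ Finset.range da, q m) / 2 := by
              rw [← Finset.sum_add_distrib, ← Finset.sum_div]
            rw [this, hpsum]
            linarith [hqsum_da]
  · -- optimum attained
    intro P₀ Q₀
    set W : Matrix (Fin d') (Fin da) ℝ := Matrix.of fun i j => U j (Fin.castLE hd'a i)
      with hWdef
    set Wv : Matrix (Fin d') (Fin db) ℝ := Matrix.of fun i j => V j (Fin.castLE hd'b i)
      with hWvdef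
    have hWW : W * Wᵀ = 1 := by
      ext i j
      rw [Matrix.mul_apply]
      simp only [hWdef, Matrix.transpose_apply, Matrix.of_apply]
      have h := Matrix.ext_iff.mpr hU' (Fin.castLE hd'a i) (Fin.castLE hd'a j)
      rw [Matrix.mul_apply] at h
      simp only [Matrix.transpose_apply] at h
      rw [h]
      simp [Matrix.one_apply, (Fin.castLE_injective hd'a).eq_iff]
    have hWvWv : Wv * Wvᵀ = 1 := by
      ext i j
      rw [Matrix.mul_apply]
      simp only [hWvdef, Matrix.transpose_apply, Matrix.of_apply]
      have h := Matrix.ext_iff.mpr hV' (Fin.castLE hd'b i) (Fin.castLE hd'b j)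
      rw [Matrix.mul_apply] at h
      simp only [Matrix.transpose_apply] at h
      rw [h]
      simp [Matrix.one_apply, (Fin.castLE_injective hd'b).eq_iff]
    refine ⟨?_, ?_, ?_⟩
    · show (W * Rxi) * (Aᵀ * A) * (W * Rxi)ᵀ = 1
      rw [← hRx_sq, Matrix.transpose_mul, hRxi_symm.eq]
      simp only [Matrix.mul_assoc]
      rw [mul_cancel_left hRx_inv, mul_cancel_left hRx_inv']
      exact hWW
    · show (Wv * Ryi) * (Bᵀ * B) * (Wv * Ryi)ᵀ = 1
      rw [← hRy_sq, Matrix.transpose_mul, hRyi_symm.eq]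
      simp only [Matrix.mul_assoc]
      rw [mul_cancel_left hRy_inv, mul_cancel_left hRy_inv']
      exact hWvWv
    · show (((W * Rxi) * (Aᵀ * B))ᵀ * (Wv * Ryi)).trace = ∑ i ∈ Finset.range d', σ i
      rw [trace_transpose_mul_comm']
      have hval : (W * Rxi) * (Aᵀ * B) * (Wv * Ryi)ᵀ = W * (U * Sm * Vᵀ) * Wvᵀ := by
        rw [hXY, Matrix.transpose_mul, hRyi_symm.eq]
        simp only [Matrix.mul_assoc]
        rw [mul_cancel_left hRx_inv', mul_cancel_left hRy_inv]
      rw [hval]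
      have hUNV : Uᵀ * (U * Sm * Vᵀ) * V = Sm := by
        simp only [Matrix.mul_assoc]
        rw [mul_cancel_left hU', hV', Matrix.mul_one]
      have hentry : ∀ (N : Matrix (Fin da) (Fin db) ℝ) (i l : Fin d'), (W * N * Wvᵀ) i l
          = (Uᵀ * N * V) (Fin.castLE hd'a i) (Fin.castLE hd'b l) := by
        intro N i l
        simp only [Matrix.mul_apply, Matrix.transpose_apply, hWdef, hWvdef, Matrix.of_apply,
          Finset.sum_mul]
      have : (W * (U * Sm * Vᵀ) * Wvᵀ).trace
          = ∑ i : Fin d', Sm (Fin.castLE hd'a i) (Fin.castLE hd'b i) := by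
        simp only [Matrix.trace, Matrix.diag]
        apply Finset.sum_congr rfl
        intro i _
        rw [hentry (U * Sm * Vᵀ) i i, hUNV]
      rw [this]
      have hdiagS : ∀ i : Fin d', Sm (Fin.castLE hd'a i) (Fin.castLE hd'b i) = σ (i : ℕ) := by
        intro i
        simp [hSm]
      rw [Finset.sum_congr rfl (fun i _ => hdiagS i)]
      exact Fin.sum_univ_eq_sum_range (fun m => σ m) d'
end

section
/- For T ∈ Π_n with positive entries, the function K ↦ KL(T ‖ OT_ε(K)) can be written as KL(T ‖ OT_ε(K)) = H(T) − (⟨T,K⟩ + W_ε(K))/ε, where W_ε(K) is the optimal value of the entropic OT problem. -/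
open BigOperators

/-- If `P = OT_ε(K)` is the minimizer of the entropic OT objective over doubly stochastic
matrices with dual decomposition `log P = u𝟙ᵀ + K/ε + 𝟙vᵀ`, then for doubly stochastic `T`
with positive entries, `KL(T‖P) = H(T) − (⟨T,K⟩ + W_ε(K))/ε`. -/
theorem kl_eq_negentropy_sub_entropic_OT {n : ℕ} (ε : ℝ) (hε : 0 < ε)
    (K P : Matrix (Fin n) (Fin n) ℝ) (u v : Fin n → ℝ)
    (hP : DoublyStoch P) (hPpos : ∀ i j, 0 < P i j)
    (hdual : ∀ i j, Real.log (P i j) = u i + K i j / ε + v j)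
    (hmin : ∀ T, DoublyStoch T →
      (-(∑ i, ∑ j, P i j * K i j) + ε * ∑ i, ∑ j, P i j * Real.log (P i j))
        ≤ (-(∑ i, ∑ j, T i j * K i j) + ε * ∑ i, ∑ j, T i j * Real.log (T i j)))
    (T : Matrix (Fin n) (Fin n) ℝ) (hT : DoublyStoch T)
    (hTpos : ∀ i j, 0 < T i j) :
    let W : ℝ :=
      -(∑ i, ∑ j, P i j * K i j) + ε * ∑ i, ∑ j, P i j * Real.log (P i j)
    ∑ i, ∑ j, T i j * Real.log (T i j / P i j)
      = (∑ i, ∑ j, T i j * Real.log (T i j))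
          - ((∑ i, ∑ j, T i j * K i j) + W) / ε := by
  intro W
  have key : ∀ S : Matrix (Fin n) (Fin n) ℝ, DoublyStoch S →
      ∑ i, ∑ j, S i j * Real.log (P i j)
        = (∑ i, u i) + (∑ j, v j) + (∑ i, ∑ j, S i j * K i j) / ε := by
    intro S hS
    simp_rw [hdual, mul_add]
    simp only [Finset.sum_add_distrib]
    have h1 : ∑ i, ∑ j, S i j * u i = ∑ i, u i := by
      simp_rw [← Finset.sum_mul, hS.2.1, one_mul]
    have h2 : ∑ i : Fin n, ∑ j : Fin n, S i j * v j = ∑ j, v j := by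
      rw [Finset.sum_comm]
      simp_rw [← Finset.sum_mul, hS.2.2, one_mul]
    have h3 : ∑ i : Fin n, ∑ j : Fin n, S i j * (K i j / ε)
        = (∑ i, ∑ j, S i j * K i j) / ε := by
      simp_rw [Finset.sum_div, mul_div_assoc]
    rw [h1, h2, h3]
    ring
  have hW : W = ε * ((∑ i, u i) + (∑ j, v j)) := by
    have := key P hP
    simp only [W, this]
    field_simp
    ring
  have hTlogP := key T hT
  have hlog : ∀ i j, Real.log (T i j / P i j) = Real.log (T i j) - Real.log (P i j) :=
    fun i j => Real.log_div (hTpos i j).ne' (hPpos i j).ne'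
  simp_rw [hlog, mul_sub, Finset.sum_sub_distrib]
  rw [hTlogP, hW]
  field_simp
  ring
end
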